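/- Let k ≤ n be positive integers, let G be a simple graph on vertex set {1,…,k} with adjacency matrix A ∈ ℝ^{k×k} and edge count |E|. Then the maximum of diag(X)ᵀ (I_k − A) diag(X) over all X ∈ V(k,n) equals 4κ(G) − 2|E| + k. -/

import Mathlib

open Matrix

/-- The size of the cut determined by a vertex subset `S`: the number of edges with one
endpoint in `S` and the other outside `S` (counted once per undirected edge). -/
def cutSize {k : ℕ} (G : SimpleGraph (Fin k)) [DecidableRel G.Adj]
    (S : Finset (Fin k)) : ℕ :=
  (Finset.univ.filter (fun p : Fin k × Fin k => G.Adj p.1 p.2 ∧ p.1 ∈ S ∧ p.2 ∉ S)).card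

/-- The max-cut of a simple graph on `Fin k`. -/
noncomputable def maxCut {k : ℕ} (G : SimpleGraph (Fin k)) [DecidableRel G.Adj] : ℕ :=
  sSup {r | ∃ S : Finset (Fin k), cutSize G S = r}

open Finset

noncomputable def stQ {k : ℕ} (G : SimpleGraph (Fin k)) [DecidableRel G.Adj]
    (d : Fin k → ℝ) : ℝ := d ⬝ᵥ ((1 - G.adjMatrix ℝ) *ᵥ d)

lemma stQ_eq {k : ℕ} (G : SimpleGraph (Fin k)) [DecidableRel G.Adj] (d : Fin k → ℝ) :
    stQ G d = ∑ i, d i * d i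
      - ∑ i, ∑ j, G.adjMatrix ℝ i j * (d i * d j) := by
  simp only [stQ, dotProduct, mulVec, Matrix.sub_apply, one_apply, dotProduct, sub_mul, mul_sub,
    Finset.mul_sum, Finset.sum_sub_distrib, mul_ite, mul_one, mul_zero]
  congr 1
  · simp [Finset.sum_ite_eq, mul_comm]
  · congr 1; ext i; congr 1; ext j; ring

lemma cross_card {k : ℕ} (G : SimpleGraph (Fin k)) [DecidableRel G.Adj] (S : Finset (Fin k)) :
    (univ.filter (fun p : Fin k × Fin k => G.Adj p.1 p.2 ∧ ¬(p.1 ∈ S ↔ p.2 ∈ S))).card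
      = 2 * cutSize G S := by
  have hsplit : (univ.filter (fun p : Fin k × Fin k => G.Adj p.1 p.2 ∧ ¬(p.1 ∈ S ↔ p.2 ∈ S)))
      = (univ.filter (fun p : Fin k × Fin k => G.Adj p.1 p.2 ∧ p.1 ∈ S ∧ p.2 ∉ S))
        ∪ (univ.filter (fun p : Fin k × Fin k => G.Adj p.1 p.2 ∧ p.1 ∉ S ∧ p.2 ∈ S)) := by
    ext p; simp only [Finset.mem_filter, Finset.mem_union, Finset.mem_univ, true_and]
    by_cases h1 : p.1 ∈ S <;> by_cases h2 : p.2 ∈ S <;> simp [h1, h2] <;> tauto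
  have hdisj : Disjoint
      (univ.filter (fun p : Fin k × Fin k => G.Adj p.1 p.2 ∧ p.1 ∈ S ∧ p.2 ∉ S))
      (univ.filter (fun p : Fin k × Fin k => G.Adj p.1 p.2 ∧ p.1 ∉ S ∧ p.2 ∈ S)) := by
    rw [Finset.disjoint_filter]
    tauto
  have hswap : (univ.filter (fun p : Fin k × Fin k => G.Adj p.1 p.2 ∧ p.1 ∉ S ∧ p.2 ∈ S)).card
      = cutSize G S := by
    unfold cutSize
    apply Finset.card_bij' (fun p _ => Prod.swap p) (fun p _ => Prod.swap p)
    · intro p hp; simp only [Finset.mem_filter, Finset.mem_univ, true_and] at hp ⊢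
      exact ⟨hp.1.symm, hp.2.2, hp.2.1⟩
    · intro p hp; simp only [Finset.mem_filter, Finset.mem_univ, true_and] at hp ⊢
      exact ⟨hp.1.symm, hp.2.2, hp.2.1⟩
    · intro p _; simp
    · intro p _; simp
  rw [hsplit, Finset.card_union_of_disjoint hdisj, hswap, two_mul]
  rfl

lemma filtsum {k : ℕ} (G : SimpleGraph (Fin k)) [DecidableRel G.Adj] (ε : Fin k → ℝ)
    (hε : ∀ i, ε i = 1 ∨ ε i = -1) :
    ∑ p ∈ univ.filter (fun p : Fin k × Fin k => G.Adj p.1 p.2), ε p.1 * ε p.2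
      = 2 * (G.edgeFinset.card : ℝ)
        - 2 * ((univ.filter (fun p : Fin k × Fin k =>
            G.Adj p.1 p.2 ∧ ¬(ε p.1 = 1 ↔ ε p.2 = 1))).card : ℝ) := by
  classical
  set P := univ.filter (fun p : Fin k × Fin k => G.Adj p.1 p.2) with hP
  set cross := fun p : Fin k × Fin k => ¬(ε p.1 = 1 ↔ ε p.2 = 1) with hc
  have key : ∀ p ∈ P, ε p.1 * ε p.2 = if cross p then -1 else 1 := by
    intro p _
    rcases hε p.1 with h1 | h1 <;> rcases hε p.2 with h2 | h2 <;>
      simp [hc, h1, h2] <;> norm_num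
  rw [Finset.sum_congr rfl key, Finset.sum_ite, Finset.sum_const, Finset.sum_const]
  have h1 : (P.filter cross).card + (P.filter (fun p => ¬ cross p)).card = P.card :=
    Finset.card_filter_add_card_filter_not _
  have h2 : 2 * G.edgeFinset.card = P.card := by
    rw [hP, SimpleGraph.two_mul_card_edgeFinset]
  have h3 : univ.filter (fun p : Fin k × Fin k => G.Adj p.1 p.2 ∧ ¬(ε p.1 = 1 ↔ ε p.2 = 1))
      = P.filter cross := by
    rw [hP, Finset.filter_filter]
  rw [h3]
  have h1' : ((P.filter cross).card : ℝ) + ((P.filter (fun p => ¬ cross p)).card : ℝ)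
      = 2 * (G.edgeFinset.card : ℝ) := by exact_mod_cast h1.trans h2.symm
  simp only [nsmul_eq_mul, mul_neg, mul_one]
  linarith

lemma stQ_sign {k : ℕ} (G : SimpleGraph (Fin k)) [DecidableRel G.Adj] (ε : Fin k → ℝ)
    (hε : ∀ i, ε i = 1 ∨ ε i = -1) :
    stQ G ε = (k : ℝ) - 2 * (G.edgeFinset.card : ℝ)
      + 4 * (cutSize G (univ.filter fun i => ε i = 1) : ℝ) := by
  classical
  rw [stQ_eq]
  have e1 : ∑ i, ε i * ε i = (k : ℝ) := by
    rw [Finset.sum_congr rfl (fun i _ => show ε i * ε i = 1 by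
      rcases hε i with h | h <;> rw [h] <;> norm_num)]
    simp
  have e2 : ∑ i, ∑ j, G.adjMatrix ℝ i j * (ε i * ε j)
      = ∑ p ∈ univ.filter (fun p : Fin k × Fin k => G.Adj p.1 p.2), ε p.1 * ε p.2 := by
    rw [Finset.sum_filter, ← Finset.sum_product']
    simp [SimpleGraph.adjMatrix_apply, ite_mul, Finset.sum_product]
  have e3 : (univ.filter (fun p : Fin k × Fin k =>
        G.Adj p.1 p.2 ∧ ¬(ε p.1 = 1 ↔ ε p.2 = 1)))
      = (univ.filter (fun p : Fin k × Fin k => G.Adj p.1 p.2 ∧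
          ¬(p.1 ∈ (univ.filter fun i => ε i = 1) ↔ p.2 ∈ (univ.filter fun i => ε i = 1)))) := by
    apply Finset.filter_congr
    intro p _
    simp
  rw [e1, e2, filtsum G ε hε, e3]
  rw [show (univ.filter (fun p : Fin k × Fin k => G.Adj p.1 p.2 ∧
      ¬(p.1 ∈ (univ.filter fun i => ε i = 1) ↔ p.2 ∈ (univ.filter fun i => ε i = 1)))).card
      = 2 * cutSize G (univ.filter fun i => ε i = 1) from cross_card G _]
  push_cast
  ring

lemma stQ_decomp {k : ℕ} (G : SimpleGraph (Fin k)) [DecidableRel G.Adj]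
    (d : Fin k → ℝ) (a : Fin k) :
    ∃ b c : ℝ, ∀ t, stQ G (Function.update d a t) = t ^ 2 + b * t + c := by
  classical
  set A := G.adjMatrix ℝ with hA
  refine ⟨-(∑ j ∈ univ.erase a, (A a j * d j + A j a * d j)),
    ∑ i ∈ univ.erase a, d i * d i
      - ∑ i ∈ univ.erase a, ∑ j ∈ univ.erase a, A i j * (d i * d j), ?_⟩
  intro t
  rw [stQ_eq]
  set d' := Function.update d a t with hd'
  have hda : d' a = t := Function.update_self a t d
  have hdi : ∀ i ∈ univ.erase a, d' i = d i := fun i hi =>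
    Function.update_of_ne (Finset.mem_erase.1 hi).1 t d
  have e1 : ∑ i, d' i * d' i = t ^ 2 + ∑ i ∈ univ.erase a, d i * d i := by
    rw [← Finset.add_sum_erase _ _ (Finset.mem_univ a), hda,
      Finset.sum_congr rfl (fun i hi => by rw [hdi i hi])]
    ring
  have e2 : ∀ i, ∑ j, A i j * (d' i * d' j)
      = A i a * (d' i * t) + ∑ j ∈ univ.erase a, A i j * (d' i * d j) := by
    intro i
    rw [← Finset.add_sum_erase _ _ (Finset.mem_univ a), hda,
      Finset.sum_congr rfl (fun j hj => by rw [hdi j hj])]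
  have e3 : ∑ i, ∑ j, A i j * (d' i * d' j)
      = (A a a * (t * t) + ∑ j ∈ univ.erase a, A a j * (t * d j))
        + ∑ i ∈ univ.erase a,
            (A i a * (d i * t) + ∑ j ∈ univ.erase a, A i j * (d i * d j)) := by
    rw [← Finset.add_sum_erase _ _ (Finset.mem_univ a), e2 a, hda]
    congr 1
    exact Finset.sum_congr rfl fun i hi => by rw [e2 i, hdi i hi]
  have hAaa : A a a = 0 := by simp [hA]
  rw [e1, e3, hAaa, Finset.sum_add_distrib]
  rw [neg_mul, Finset.sum_mul]
  have : ∑ j ∈ univ.erase a, (A a j * d j + A j a * d j) * t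
      = ∑ j ∈ univ.erase a, A a j * (t * d j) + ∑ i ∈ univ.erase a, A i a * (d i * t) := by
    rw [← Finset.sum_add_distrib]
    exact Finset.sum_congr rfl fun j _ => by ring
  rw [this]
  ring

lemma stQ_convex_step {k : ℕ} (G : SimpleGraph (Fin k)) [DecidableRel G.Adj]
    (d : Fin k → ℝ) (a : Fin k) (t : ℝ) (ht : t ^ 2 ≤ 1) :
    stQ G (Function.update d a t) ≤
      max (stQ G (Function.update d a 1)) (stQ G (Function.update d a (-1))) := by
  obtain ⟨b, c, hq⟩ := stQ_decomp G d a
  rw [hq t, hq 1, hq (-1)]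
  have h1 : -1 ≤ t := by nlinarith
  have h2 : t ≤ 1 := by nlinarith
  rcases le_total 0 b with hb | hb
  · exact le_max_of_le_left (by nlinarith)
  · exact le_max_of_le_right (by nlinarith)

lemma stQ_to_signs {k : ℕ} (G : SimpleGraph (Fin k)) [DecidableRel G.Adj] :
    ∀ (T : Finset (Fin k)) (d : Fin k → ℝ), (∀ i, d i ^ 2 ≤ 1) →
      (∀ i, i ∉ T → d i = 1 ∨ d i = -1) →
      ∃ ε : Fin k → ℝ, (∀ i, ε i = 1 ∨ ε i = -1) ∧ stQ G d ≤ stQ G ε := by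
  classical
  intro T
  induction T using Finset.induction_on with
  | empty => intro d hd h; exact ⟨d, fun i => h i (by simp), le_refl _⟩
  | @insert a T ha ih =>
    intro d hd h
    have hd0 : stQ G d = stQ G (Function.update d a (d a)) := by
      rw [Function.update_eq_self]
    have hstep := stQ_convex_step G d a (d a) (hd a)
    rcases le_max_iff.1 hstep with hc | hc
    · obtain ⟨ε, hε, hle⟩ := ih (Function.update d a 1)
        (fun i => by
          rcases eq_or_ne i a with rfl | hia
          · simp
          · rw [Function.update_of_ne hia]; exact hd i)
        (fun i hi => by
          rcases eq_or_ne i a with rfl | hia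
          · simp
          · rw [Function.update_of_ne hia]
            exact h i (by simp [hia, hi]))
      exact ⟨ε, hε, by rw [hd0]; exact le_trans hc hle⟩
    · obtain ⟨ε, hε, hle⟩ := ih (Function.update d a (-1))
        (fun i => by
          rcases eq_or_ne i a with rfl | hia
          · simp
          · rw [Function.update_of_ne hia]; exact hd i)
        (fun i hi => by
          rcases eq_or_ne i a with rfl | hia
          · simp
          · rw [Function.update_of_ne hia]
            exact h i (by simp [hia, hi]))
      exact ⟨ε, hε, by rw [hd0]; exact le_trans hc hle⟩

lemma maxCut_bdd {k : ℕ} (G : SimpleGraph (Fin k)) [DecidableRel G.Adj] :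
    BddAbove {r | ∃ S : Finset (Fin k), cutSize G S = r} := by
  refine ⟨(univ : Finset (Fin k × Fin k)).card, fun r hr => ?_⟩
  obtain ⟨S, hS⟩ := hr
  exact hS ▸ Finset.card_filter_le _ _

lemma cutSize_le_maxCut {k : ℕ} (G : SimpleGraph (Fin k)) [DecidableRel G.Adj]
    (S : Finset (Fin k)) : cutSize G S ≤ maxCut G :=
  le_csSup (maxCut_bdd G) ⟨S, rfl⟩

/-- The maximum of `diag(X)ᵀ (I_k − A) diag(X)` over the Stiefel manifold `V(k,n)`
equals `4κ(G) − 2|E| + k`. -/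
theorem stmt8 (k n : ℕ) (hk : 0 < k) (hkn : k ≤ n)
    (G : SimpleGraph (Fin k)) [DecidableRel G.Adj] :
    IsGreatest {y : ℝ | ∃ X : Matrix (Fin n) (Fin k) ℝ, Xᵀ * X = 1 ∧
        y = (fun i : Fin k => X (Fin.castLE hkn i) i) ⬝ᵥ
          ((1 - G.adjMatrix ℝ) *ᵥ (fun i : Fin k => X (Fin.castLE hkn i) i))}
      (4 * (maxCut G : ℝ) - 2 * (G.edgeFinset.card : ℝ) + k) := by
  classical
  constructor
  · -- membership
    obtain ⟨S, hS⟩ : ∃ S : Finset (Fin k), cutSize G S = maxCut G := by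
      have := Nat.sSup_mem (⟨cutSize G ∅, ∅, rfl⟩ :
        Set.Nonempty {r | ∃ S : Finset (Fin k), cutSize G S = r}) (maxCut_bdd G)
      exact this
    set ε : Fin k → ℝ := fun i => if i ∈ S then 1 else -1 with hεdef
    have hε : ∀ i, ε i = 1 ∨ ε i = -1 := fun i => by
      by_cases h : i ∈ S <;> simp [hεdef, h]
    refine ⟨Matrix.of fun p i => if p = Fin.castLE hkn i then ε i else 0, ?_, ?_⟩
    · ext i j
      rw [Matrix.mul_apply]
      simp only [transpose_apply, Matrix.of_apply, ite_mul, zero_mul, mul_ite, mul_zero]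
      rw [Finset.sum_ite_eq' univ (Fin.castLE hkn j)
        (fun x => if x = Fin.castLE hkn i then ε i * ε j else 0)]
      simp only [mem_univ, if_true]
      rcases eq_or_ne i j with rfl | hij
      · simp only [if_pos rfl, Matrix.one_apply_eq]
        rcases hε i with h | h <;> rw [h] <;> norm_num
      · have : (Fin.castLE hkn j : Fin n) ≠ Fin.castLE hkn i := by
          intro h
          exact hij (Fin.castLE_injective hkn h).symm
        rw [if_neg this, Matrix.one_apply_ne hij]
    · have hdiag : (fun i : Fin k =>
          Matrix.of (fun p i => if p = Fin.castLE hkn i then ε i else 0) (Fin.castLE hkn i) i)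
          = ε := by
        funext i; simp
      rw [hdiag]
      have : ε ⬝ᵥ ((1 - G.adjMatrix ℝ) *ᵥ ε) = stQ G ε := rfl
      rw [this, stQ_sign G ε hε]
      have hfil : (univ.filter fun i => ε i = 1) = S := by
        ext i
        by_cases h : i ∈ S <;> simp [hεdef, h] <;> norm_num
      rw [hfil, hS]
      ring
  · -- upper bound
    rintro y ⟨X, hX, rfl⟩
    set d : Fin k → ℝ := fun i => X (Fin.castLE hkn i) i with hd
    have hd1 : ∀ i, d i ^ 2 ≤ 1 := by
      intro i
      have h1 : (Xᵀ * X) i i = 1 := by rw [hX]; simp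
      rw [Matrix.mul_apply] at h1
      simp only [transpose_apply] at h1
      have h2 : X (Fin.castLE hkn i) i * X (Fin.castLE hkn i) i
          ≤ ∑ p, X p i * X p i :=
        Finset.single_le_sum (f := fun p => X p i * X p i)
          (fun p _ => mul_self_nonneg _) (Finset.mem_univ _)
      rw [h1] at h2
      calc d i ^ 2 = X (Fin.castLE hkn i) i * X (Fin.castLE hkn i) i := by rw [hd]; ring
        _ ≤ 1 := h2
    obtain ⟨ε, hε, hle⟩ := stQ_to_signs G univ d hd1 (fun i hi => absurd (mem_univ i) hi)
    have : d ⬝ᵥ ((1 - G.adjMatrix ℝ) *ᵥ d) = stQ G d := rfl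
    rw [this]
    refine le_trans hle ?_
    rw [stQ_sign G ε hε]
    have := cutSize_le_maxCut G (univ.filter fun i => ε i = 1)
    have hc : (cutSize G (univ.filter fun i => ε i = 1) : ℝ) ≤ (maxCut G : ℝ) := by
      exact_mod_cast this
    linarith
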